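/- Let f be a nonzero element of the free right-symmetric algebra A = RS⟨x_1,…,x_n⟩, let B = RS⟨x_1,…,x_n,y⟩ be the free right-symmetric algebra on one additional variable y (with y > x_n), let W_y be the set of good words in the alphabet {x_1,…,x_n,y} of degree exactly 1 in y, and let π : B → A be the algebra homomorphism with π(x_i) = x_i and π(y) = f. Then the k-linear span of π(W_y) is exactly the two-sided ideal (f) of A generated by f. -/

import Mathlib

namespace RS

/-- The degree of a nonassociative word. -/
def deg {X : Type*} : FreeMagma X → ℕ
  | .of _ => 1
  | .mul u v => deg u + deg v

/-- The order on nonassociative words: `u < v` if `d u < d v`; words of equal degree 1 are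
compared in `X`; words `u = u₁u₂`, `v = v₁v₂` of equal degree `≥ 2` are compared
lexicographically. -/
def wlt {X : Type*} [LinearOrder X] : FreeMagma X → FreeMagma X → Prop
  | .of a, .of b => a < b
  | .of _, .mul _ _ => True
  | .mul _ _, .of _ => False
  | .mul u₁ u₂, .mul v₁ v₂ =>
      deg (FreeMagma.mul u₁ u₂) < deg (FreeMagma.mul v₁ v₂) ∨
        (deg (FreeMagma.mul u₁ u₂) = deg (FreeMagma.mul v₁ v₂) ∧
          (wlt u₁ v₁ ∨ (u₁ = v₁ ∧ wlt u₂ v₂)))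

/-- `u ≤ v` on nonassociative words. -/
def wle {X : Type*} [LinearOrder X] (u v : FreeMagma X) : Prop := wlt u v ∨ u = v

/-- A word is good if it contains no subword `(rs)t` with `s > t`. -/
def IsGood {X : Type*} [LinearOrder X] : FreeMagma X → Prop
  | .of _ => True
  | .mul (.of _) v => IsGood v
  | .mul (.mul u₁ u₂) v =>
      IsGood (FreeMagma.mul u₁ u₂) ∧ IsGood v ∧ ¬ wlt v u₂

/-- Evaluation of a nonassociative word at values `x` in a magma `A`. -/
def evalWord {X A : Type*} [Mul A] (x : X → A) : FreeMagma X → A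
  | .of a => x a
  | .mul u v => evalWord x u * evalWord x v

/-- Data exhibiting a nonunital nonassociative `k`-algebra `A` as the free right-symmetric
algebra `RS⟨x_1,…,x_n⟩`: `A` satisfies the right-symmetric identity and the images of the good
words form a `k`-linear basis (Segal's theorem). -/
structure FreeRSData (k : Type*) [Field k] (n : ℕ) (A : Type*)
    [NonUnitalNonAssocRing A] [Module k A] where
  rightSymm : ∀ a b c : A, (a * b) * c - a * (b * c) = (a * c) * b - a * (c * b)
  x : Fin n → A
  basis : Module.Basis {w : FreeMagma (Fin n) // IsGood w} k A
  basis_eq : ∀ w : {w : FreeMagma (Fin n) // IsGood w}, basis w = evalWord x w.1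

/-- `w` is the leading word of `f`: it is a good word occurring in the representation of `f`
in the basis of good words, and every other good word occurring there is smaller. -/
def IsLeadingWord {k : Type*} [Field k] {n : ℕ} {A : Type*} [NonUnitalNonAssocRing A]
    [Module k A] (D : FreeRSData k n A) (f : A) (w : FreeMagma (Fin n)) : Prop :=
  ∃ hw : IsGood w,
    (⟨w, hw⟩ : {u : FreeMagma (Fin n) // IsGood u}) ∈ (D.basis.repr f).support ∧
      ∀ u ∈ (D.basis.repr f).support, u.1 ≠ w → wlt u.1 w

/-- The left-normed word `x R_{w_1} ⋯ R_{w_m} = (…((x w_1) w_2) … w_m)`. -/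
def leftNormed {X : Type*} (a : FreeMagma X) (l : List (FreeMagma X)) : FreeMagma X :=
  l.foldl FreeMagma.mul a

/-- The degree of a word in the variable `a`. -/
def countVar {X : Type*} [DecidableEq X] (a : X) : FreeMagma X → ℕ
  | .of b => if b = a then 1 else 0
  | .mul u v => countVar a u + countVar a v

/-- The two-sided ideal of the nonunital nonassociative `k`-algebra `A` generated by `f`. -/
def idealGen (k : Type*) [Field k] {A : Type*} [NonUnitalNonAssocRing A] [Module k A]
    (f : A) : Submodule k A :=
  sInf {I : Submodule k A | f ∈ I ∧ ∀ a : A, ∀ y ∈ I, a * y ∈ I ∧ y * a ∈ I}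

/-- A pair of (nonzero) elements `f, g` is reducible if there is a good word `s` in a single
variable with `s(f̄) = ḡ` or `s(ḡ) = f̄`. -/
def Reducible {k : Type*} [Field k] {n : ℕ} {A : Type*} [NonUnitalNonAssocRing A]
    [Module k A] (D : FreeRSData k n A) (f g : A) : Prop :=
  ∃ wf wg : FreeMagma (Fin n), IsLeadingWord D f wf ∧ IsLeadingWord D g wg ∧
    ∃ s : FreeMagma Unit, IsGood s ∧
      (evalWord (fun _ => wf) s = wg ∨ evalWord (fun _ => wg) s = wf)

/-- An elementary automorphism: it fixes all generators but one, which is sent to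
`α x_i + f` with `α ≠ 0` and `f` in the subalgebra generated by the other generators. -/
def IsElementary {k : Type*} [Field k] {n : ℕ} {A : Type*} [NonUnitalNonAssocRing A]
    [Module k A] [SMulCommClass k A A] [IsScalarTower k A A]
    (D : FreeRSData k n A) (e : A →ₙₐ[k] A) : Prop :=
  Function.Bijective e ∧ ∃ i : Fin n,
    (∀ j : Fin n, j ≠ i → e (D.x j) = D.x j) ∧
    ∃ (α : k) (f : A), α ≠ 0 ∧
      f ∈ NonUnitalAlgebra.adjoin k (D.x '' {j | j ≠ i}) ∧
      e (D.x i) = α • D.x i + f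



section Code

variable {m : ℕ}

/-- Bound function for the encoding. -/
def Abnd (m : ℕ) : ℕ → ℕ
  | 0 => 0
  | 1 => 0
  | 2 => m + 1
  | (d + 3) => Abnd m (d + 2) * Abnd m (d + 2) + 2 * Abnd m (d + 2)

lemma Abnd_succ (d : ℕ) (hd : 2 ≤ d) :
    Abnd m (d + 1) = Abnd m d * Abnd m d + 2 * Abnd m d := by
  obtain ⟨e, rfl⟩ : ∃ e, d = e + 2 := ⟨d - 2, by omega⟩
  rfl

lemma Abnd_mono_succ (d : ℕ) : Abnd m d ≤ Abnd m (d + 1) := by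
  match d with
  | 0 => simp [Abnd]
  | 1 => simp [Abnd]
  | (e + 2) =>
    rw [Abnd_succ (e + 2) (by omega)]
    nlinarith [Nat.zero_le (Abnd m (e + 2))]

lemma Abnd_mono {d e : ℕ} (h : d ≤ e) : Abnd m d ≤ Abnd m e :=
  monotone_nat_of_le_succ Abnd_mono_succ h

lemma Abnd_pos {d : ℕ} (h : 2 ≤ d) : 1 ≤ Abnd m d :=
  le_trans (by simp [Abnd]) (Abnd_mono h)

/-- An order embedding of `wlt` into `ℕ`. -/
def code : FreeMagma (Fin m) → ℕ
  | .of a => a.val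
  | .mul u v => Abnd m (deg (FreeMagma.mul u v)) * (code u + 1) + code v

lemma code_mul (u v : FreeMagma (Fin m)) :
    code (FreeMagma.mul u v) = Abnd m (deg (FreeMagma.mul u v)) * (code u + 1) + code v := rfl

lemma deg_mul (u v : FreeMagma (Fin m)) :
    deg (FreeMagma.mul u v) = deg u + deg v := rfl

lemma deg_pos (w : FreeMagma (Fin m)) : 1 ≤ deg w := by
  induction w using FreeMagma.rec with
  | of a => exact le_rfl
  | mul u v ihu ihv => rw [deg_mul]; omega

lemma code_lt (w : FreeMagma (Fin m)) : code w < Abnd m (deg w + 1) := by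
  induction w using FreeMagma.rec with
  | of a => exact lt_of_lt_of_le a.isLt (Nat.le_succ m)
  | mul u v ihu ihv =>
    have hdu := deg_pos u
    have hdv := deg_pos v
    have hd : 2 ≤ deg (FreeMagma.mul u v) := by rw [deg_mul]; omega
    have hu : code u + 1 ≤ Abnd m (deg (FreeMagma.mul u v)) :=
      le_trans ihu (Abnd_mono (by rw [deg_mul]; omega))
    have hv : code v < Abnd m (deg (FreeMagma.mul u v)) :=
      lt_of_lt_of_le ihv (Abnd_mono (by rw [deg_mul]; omega))
    rw [Abnd_succ _ hd, code_mul]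
    have := Nat.mul_le_mul_left (Abnd m (deg (FreeMagma.mul u v))) hu
    omega

lemma code_ge (u v : FreeMagma (Fin m)) :
    Abnd m (deg (FreeMagma.mul u v)) ≤ code (FreeMagma.mul u v) := by
  rw [code_mul]
  have : Abnd m (deg (FreeMagma.mul u v)) * 1 ≤
      Abnd m (deg (FreeMagma.mul u v)) * (code u + 1) :=
    Nat.mul_le_mul_left _ (by omega)
  omega

lemma code_lt_of_deg_lt {u v : FreeMagma (Fin m)} (h : deg u < deg v) : code u < code v := by
  match v with
  | .of b => have := deg_pos u; exact absurd h (by simp [deg]; omega)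
  | .mul v₁ v₂ =>
    exact lt_of_lt_of_le (lt_of_lt_of_le (code_lt u) (Abnd_mono (by omega))) (code_ge v₁ v₂)

lemma deg_le_of_code_lt {u v : FreeMagma (Fin m)} (h : code u < code v) : deg u ≤ deg v := by
  by_contra hc
  have := code_lt_of_deg_lt (u := v) (v := u) (by omega)
  omega

lemma code_mul_lt_right {u v v' : FreeMagma (Fin m)} (h : code v' < code v) :
    code (FreeMagma.mul u v') < code (FreeMagma.mul u v) := by
  have hle : deg v' ≤ deg v := deg_le_of_code_lt h
  rcases lt_or_eq_of_le hle with h' | h'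
  · exact code_lt_of_deg_lt (by rw [deg_mul, deg_mul]; omega)
  · rw [code_mul, code_mul, deg_mul, deg_mul, h']
    omega

lemma code_mul_lt_left {u u' v : FreeMagma (Fin m)} (h : code u' < code u) :
    code (FreeMagma.mul u' v) < code (FreeMagma.mul u v) := by
  have hle : deg u' ≤ deg u := deg_le_of_code_lt h
  rcases lt_or_eq_of_le hle with h' | h'
  · exact code_lt_of_deg_lt (by rw [deg_mul, deg_mul]; omega)
  · rw [code_mul, code_mul, deg_mul, deg_mul, h']
    have h2 : Abnd m (deg u + deg v) * (code u' + 2) ≤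
        Abnd m (deg u + deg v) * (code u + 1) := Nat.mul_le_mul_left _ (by omega)
    have h3 : Abnd m (deg u + deg v) * (code u' + 2) =
        Abnd m (deg u + deg v) * (code u' + 1) + Abnd m (deg u + deg v) := by ring
    have hp : 1 ≤ Abnd m (deg u + deg v) :=
      Abnd_pos (by have := deg_pos u; have := deg_pos v; omega)
    omega

/-- The code strictly respects the word order. -/
lemma code_wlt : ∀ {u v : FreeMagma (Fin m)}, wlt u v → code u < code v := by
  intro u
  induction u using FreeMagma.rec with
  | of a =>
    intro v h
    match v with
    | .of b => exact (by simpa [wlt] using h : a < b)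
    | .mul v₁ v₂ =>
      calc code (FreeMagma.of a) = a.val := rfl
        _ < Abnd m 2 := by simpa [Abnd] using lt_of_lt_of_le a.isLt (Nat.le_succ m)
        _ ≤ Abnd m (deg (FreeMagma.mul v₁ v₂)) := by
            apply Abnd_mono
            have := deg_pos v₁; have := deg_pos v₂; rw [deg_mul]; omega
        _ ≤ code (FreeMagma.mul v₁ v₂) := code_ge v₁ v₂
  | mul u₁ u₂ ih₁ ih₂ =>
    intro v h
    match v with
    | .of b => exact absurd h (by simp [wlt])
    | .mul v₁ v₂ =>
      rcases (by simpa [wlt] using h :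
        deg (FreeMagma.mul u₁ u₂) < deg (FreeMagma.mul v₁ v₂) ∨
        (deg (FreeMagma.mul u₁ u₂) = deg (FreeMagma.mul v₁ v₂) ∧
          (wlt u₁ v₁ ∨ (u₁ = v₁ ∧ wlt u₂ v₂)))) with h' | ⟨hdeq, h'⟩
      · exact code_lt_of_deg_lt h'
      · rcases h' with h' | ⟨rfl, h'⟩
        · have h1 : code u₁ + 1 ≤ code v₁ := ih₁ h'
          rw [code_mul, code_mul, hdeq]
          have hd2 : 2 ≤ deg (FreeMagma.mul v₁ v₂) := by
            have := deg_pos v₁; have := deg_pos v₂; rw [deg_mul]; omega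
          have hu2 : code u₂ < Abnd m (deg (FreeMagma.mul v₁ v₂)) := by
            refine lt_of_lt_of_le (code_lt u₂) (Abnd_mono ?_)
            have := deg_pos u₁
            rw [deg_mul] at hdeq
            omega
          have h2 : Abnd m (deg (FreeMagma.mul v₁ v₂)) * (code u₁ + 2) ≤
              Abnd m (deg (FreeMagma.mul v₁ v₂)) * (code v₁ + 1) :=
            Nat.mul_le_mul_left _ (by omega)
          have h3 : Abnd m (deg (FreeMagma.mul v₁ v₂)) * (code u₁ + 2) =
              Abnd m (deg (FreeMagma.mul v₁ v₂)) * (code u₁ + 1) +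
                Abnd m (deg (FreeMagma.mul v₁ v₂)) := by ring
          omega
        · exact code_mul_lt_right (ih₂ h')

lemma wlt_of_deg_lt {u v : FreeMagma (Fin m)} (h : deg u < deg v) : wlt u v := by
  match u, v with
  | .of a, .of b => exact absurd h (by simp [deg])
  | .of a, .mul v₁ v₂ => trivial
  | .mul u₁ u₂, .of b => exact absurd h (by have := deg_pos u₁; have := deg_pos u₂; simp [deg]; omega)
  | .mul u₁ u₂, .mul v₁ v₂ => exact Or.inl h

lemma wlt_deg_le {u v : FreeMagma (Fin m)} (h : wlt u v) : deg u ≤ deg v := by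
  match u, v with
  | .of a, .of b => exact le_rfl
  | .of a, .mul v₁ v₂ => have := deg_pos v₁; have := deg_pos v₂; simp [deg]; omega
  | .mul u₁ u₂, .of b => exact absurd h (by simp [wlt])
  | .mul u₁ u₂, .mul v₁ v₂ =>
    rcases (h : _ ∨ _) with h' | ⟨hdeq, _⟩
    · exact le_of_lt h'
    · exact le_of_eq hdeq

end Code

section Reduce

variable {k : Type*} [Field k] {m : ℕ}
variable {R : Type*} [NonUnitalNonAssocRing R] [Module k R]
  [SMulCommClass k R R] [IsScalarTower k R R]

lemma countVar_mul (a : Fin m) (u v : FreeMagma (Fin m)) :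
    countVar a (FreeMagma.mul u v) = countVar a u + countVar a v := rfl

lemma evalWord_mul (x : Fin m → R) (u v : FreeMagma (Fin m)) :
    evalWord x (FreeMagma.mul u v) = evalWord x u * evalWord x v := rfl

/-- The target set for the reduction of a word `w`: evaluations of good words with the same
`ℓ`-count as `w` that are at most `w` in the order. -/
def redSet (x : Fin m → R) (ℓ : Fin m) (w : FreeMagma (Fin m)) : Set R :=
  {b | ∃ u, IsGood u ∧ countVar ℓ u = countVar ℓ w ∧ (u = w ∨ code u < code w) ∧
    b = evalWord x u}

lemma redSet_subset {x : Fin m → R} {ℓ : Fin m} {w' w : FreeMagma (Fin m)}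
    (h1 : countVar ℓ w' = countVar ℓ w) (h2 : code w' < code w) :
    redSet x ℓ w' ⊆ redSet x ℓ w := by
  rintro b ⟨u, hg, hc, hlt, rfl⟩
  refine ⟨u, hg, hc.trans h1, Or.inr ?_, rfl⟩
  rcases hlt with rfl | hlt
  · exact h2
  · exact hlt.trans h2

/-- Reduction of an arbitrary word to a combination of good words, preserving
the count of a chosen variable, in a right-symmetric algebra. -/
lemma reduce (hRS : ∀ a b c : R, (a * b) * c - a * (b * c) = (a * c) * b - a * (c * b))
    (x : Fin m → R) (ℓ : Fin m) (w : FreeMagma (Fin m)) :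
    evalWord x w ∈ Submodule.span k (redSet x ℓ w) := by
  suffices H : ∀ N : ℕ, ∀ w : FreeMagma (Fin m), code w ≤ N →
      evalWord x w ∈ Submodule.span k (redSet x ℓ w) from H (code w) w le_rfl
  intro N
  induction N using Nat.strong_induction_on with
  | _ N IH =>
    intro w hwN
    match w with
    | .of a =>
      exact Submodule.subset_span ⟨.of a, trivial, rfl, Or.inl rfl, rfl⟩
    | .mul u v =>
      by_cases hg : IsGood (FreeMagma.mul u v)
      · exact Submodule.subset_span ⟨_, hg, rfl, Or.inl rfl, rfl⟩
      have hd2 : 2 ≤ deg (FreeMagma.mul u v) := by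
        have := deg_pos u; have := deg_pos v; rw [deg_mul]; omega
      have hA1 : 1 ≤ Abnd m (deg (FreeMagma.mul u v)) := Abnd_pos hd2
      have hcu : code u < code (FreeMagma.mul u v) := by
        rw [code_mul]
        have : Abnd m (deg (FreeMagma.mul u v)) * (code u + 1) ≥ 1 * (code u + 1) :=
          Nat.mul_le_mul_right _ hA1
        omega
      have hcv : code v < code (FreeMagma.mul u v) := by
        rw [code_mul]
        have : Abnd m (deg (FreeMagma.mul u v)) * (code u + 1) ≥ 1 * (code u + 1) :=
          Nat.mul_le_mul_right _ hA1
        omega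
      by_cases hgu : IsGood u
      · by_cases hgv : IsGood v
        · -- top-level bad: u = mul u₁ u₂ and wlt v u₂
          match u, hgu, hcu with
          | .of b, _, _ =>
            exact absurd (show IsGood (FreeMagma.mul (.of b) v) from hgv) hg
          | .mul u₁ u₂, hgu, hcu =>
            have hvu2 : wlt v u₂ := by
              by_contra hcon
              exact hg ⟨hgu, hgv, hcon⟩
            -- the three replacement words
            have hw1 : wlt (FreeMagma.mul u₁ (FreeMagma.mul u₂ v))
                (FreeMagma.mul (FreeMagma.mul u₁ u₂) v) := by
              refine Or.inr ⟨by simp only [deg_mul]; omega, Or.inl ?_⟩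
              exact wlt_of_deg_lt (by have := deg_pos u₂; rw [deg_mul]; omega)
            have hw2 : wlt (FreeMagma.mul (FreeMagma.mul u₁ v) u₂)
                (FreeMagma.mul (FreeMagma.mul u₁ u₂) v) := by
              refine Or.inr ⟨by simp only [deg_mul]; omega, Or.inl ?_⟩
              have hdle : deg v ≤ deg u₂ := wlt_deg_le hvu2
              rcases lt_or_eq_of_le hdle with h' | h'
              · exact wlt_of_deg_lt (by rw [deg_mul, deg_mul]; omega)
              · exact Or.inr ⟨by rw [deg_mul, deg_mul, h'], Or.inr ⟨rfl, hvu2⟩⟩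
            have hw3 : wlt (FreeMagma.mul u₁ (FreeMagma.mul v u₂))
                (FreeMagma.mul (FreeMagma.mul u₁ u₂) v) := by
              refine Or.inr ⟨by simp only [deg_mul]; omega, Or.inl ?_⟩
              exact wlt_of_deg_lt (by have := deg_pos u₂; rw [deg_mul]; omega)
            have hrw : evalWord x (FreeMagma.mul (FreeMagma.mul u₁ u₂) v) =
                evalWord x (FreeMagma.mul u₁ (FreeMagma.mul u₂ v)) +
                  evalWord x (FreeMagma.mul (FreeMagma.mul u₁ v) u₂) -
                  evalWord x (FreeMagma.mul u₁ (FreeMagma.mul v u₂)) := by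
              simp only [evalWord_mul]
              have := hRS (evalWord x u₁) (evalWord x u₂) (evalWord x v)
              have h' : (evalWord x u₁ * evalWord x u₂) * evalWord x v =
                  evalWord x u₁ * (evalWord x u₂ * evalWord x v) +
                    ((evalWord x u₁ * evalWord x v) * evalWord x u₂ -
                      evalWord x u₁ * (evalWord x v * evalWord x u₂)) := by
                rw [← this]; abel
              rw [h']; abel
            have key : ∀ w' : FreeMagma (Fin m),
                wlt w' (FreeMagma.mul (FreeMagma.mul u₁ u₂) v) →
                countVar ℓ w' = countVar ℓ (FreeMagma.mul (FreeMagma.mul u₁ u₂) v) →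
                evalWord x w' ∈ Submodule.span k
                  (redSet x ℓ (FreeMagma.mul (FreeMagma.mul u₁ u₂) v)) := by
              intro w' hwlt hcnt
              have hc : code w' < code (FreeMagma.mul (FreeMagma.mul u₁ u₂) v) :=
                code_wlt hwlt
              exact Submodule.span_mono (redSet_subset hcnt hc)
                (IH (code w') (by omega) w' le_rfl)
            rw [hrw]
            refine sub_mem (add_mem ?_ ?_) ?_
            · exact key _ hw1 (by simp only [countVar_mul]; omega)
            · exact key _ hw2 (by simp only [countVar_mul]; omega)
            · exact key _ hw3 (by simp only [countVar_mul]; omega)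
        · -- v is not good: reduce v and recurse
          have hv := IH (code v) (by omega) v le_rfl
          have goal : ∀ (b : R), b ∈ Submodule.span k (redSet x ℓ v) →
              evalWord x u * b ∈ Submodule.span k (redSet x ℓ (FreeMagma.mul u v)) := by
            intro b hb
            induction hb using Submodule.span_induction with
            | mem b hbmem =>
              obtain ⟨v', hg', hc', hlt', rfl⟩ := hbmem
              have hne : v' ≠ v := fun h => hgv (h ▸ hg')
              have hlt'' : code v' < code v := by
                rcases hlt' with h | h
                · exact absurd h hne
                · exact h
              have hcm : code (FreeMagma.mul u v') < code (FreeMagma.mul u v) :=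
                code_mul_lt_right hlt''
              have : evalWord x u * evalWord x v' = evalWord x (FreeMagma.mul u v') := rfl
              rw [this]
              refine Submodule.span_mono (redSet_subset ?_ hcm)
                (IH (code (FreeMagma.mul u v')) (by omega) _ le_rfl)
              simp only [countVar_mul]; omega
            | zero => simpa using Submodule.zero_mem _
            | add b c _ _ hb hc => rw [mul_add]; exact add_mem hb hc
            | smul r b _ hb => rw [mul_smul_comm]; exact Submodule.smul_mem _ r hb
          exact goal _ hv
      · -- u is not good: reduce u and recurse
        have hu := IH (code u) (by omega) u le_rfl
        have goal : ∀ (b : R), b ∈ Submodule.span k (redSet x ℓ u) →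
            b * evalWord x v ∈ Submodule.span k (redSet x ℓ (FreeMagma.mul u v)) := by
          intro b hb
          induction hb using Submodule.span_induction with
          | mem b hbmem =>
            obtain ⟨u', hg', hc', hlt', rfl⟩ := hbmem
            have hne : u' ≠ u := fun h => hgu (h ▸ hg')
            have hlt'' : code u' < code u := by
              rcases hlt' with h | h
              · exact absurd h hne
              · exact h
            have hcm : code (FreeMagma.mul u' v) < code (FreeMagma.mul u v) :=
              code_mul_lt_left hlt''
            have : evalWord x u' * evalWord x v = evalWord x (FreeMagma.mul u' v) := rfl
            rw [this]
            refine Submodule.span_mono (redSet_subset ?_ hcm)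
              (IH (code (FreeMagma.mul u' v)) (by omega) _ le_rfl)
            simp only [countVar_mul]; omega
          | zero => simpa using Submodule.zero_mem _
          | add b c _ _ hb hc => rw [add_mul]; exact add_mem hb hc
          | smul r b _ hb => rw [smul_mul_assoc]; exact Submodule.smul_mem _ r hb
        exact goal _ hu

end Reduce

section Main

/-- Embedding of words over `Fin n` into words over `Fin (n+1)`. -/
def emb {n : ℕ} : FreeMagma (Fin n) → FreeMagma (Fin (n + 1)) :=
  evalWord (fun i => FreeMagma.of i.castSucc)

lemma emb_of {n : ℕ} (i : Fin n) : emb (FreeMagma.of i) = FreeMagma.of i.castSucc := rfl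

lemma emb_mul {n : ℕ} (u v : FreeMagma (Fin n)) :
    emb (FreeMagma.mul u v) = FreeMagma.mul (emb u) (emb v) := rfl

lemma countVar_emb {n : ℕ} (u : FreeMagma (Fin n)) :
    countVar (Fin.last n) (emb u) = 0 := by
  induction u using FreeMagma.rec with
  | of i => simp [emb_of, countVar, (Fin.castSucc_lt_last i).ne]
  | mul u v ihu ihv => rw [emb_mul, countVar_mul, ihu, ihv]

theorem statement9' (k : Type*) [Field k] (n : ℕ) (A B : Type*)
    [NonUnitalNonAssocRing A] [Module k A] [SMulCommClass k A A] [IsScalarTower k A A]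
    [NonUnitalNonAssocRing B] [Module k B] [SMulCommClass k B B] [IsScalarTower k B B]
    (DA : FreeRSData k n A) (DB : FreeRSData k (n + 1) B)
    (f : A) (hf : f ≠ 0)
    (π : B →ₙₐ[k] A)
    (hπx : ∀ i : Fin n, π (DB.x i.castSucc) = DA.x i)
    (hπy : π (DB.x (Fin.last n)) = f) :
    Submodule.span k {a : A | ∃ w : FreeMagma (Fin (n + 1)),
        IsGood w ∧ countVar (Fin.last n) w = 1 ∧ a = π (evalWord DB.x w)} =
      idealGen k f := by
  set S : Set A := {a : A | ∃ w : FreeMagma (Fin (n + 1)),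
      IsGood w ∧ countVar (Fin.last n) w = 1 ∧ a = π (evalWord DB.x w)} with hS
  -- π of the embedding of a word over `Fin n`
  have pi_emb : ∀ u : FreeMagma (Fin n),
      π (evalWord DB.x (emb u)) = evalWord DA.x u := by
    intro u
    induction u using FreeMagma.rec with
    | of i => rw [emb_of]; exact hπx i
    | mul u v ihu ihv =>
      rw [emb_mul, evalWord_mul, map_mul, ihu, ihv]; rfl
  -- any word of y-count one maps into the span of S
  have pi_mem : ∀ w : FreeMagma (Fin (n + 1)), countVar (Fin.last n) w = 1 →
      π (evalWord DB.x w) ∈ Submodule.span k S := by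
    intro w hw
    have h := reduce (k := k) DB.rightSymm DB.x (Fin.last n) w
    refine Submodule.span_induction (p := fun b _ => π b ∈ Submodule.span k S)
      ?_ ?_ ?_ ?_ h
    -- mem
    · intro b hbmem
      obtain ⟨u, hgood, hcnt, -, rfl⟩ := hbmem
      exact Submodule.subset_span ⟨u, hgood, hcnt.trans hw, rfl⟩
    · show π 0 ∈ Submodule.span k S
      rw [map_zero]; exact Submodule.zero_mem _
    · intro b c _ _ hb hc
      show π (b + c) ∈ Submodule.span k S
      rw [map_add]; exact add_mem hb hc
    · intro r b _ hb
      show π (r • b) ∈ Submodule.span k S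
      rw [map_smul]; exact Submodule.smul_mem _ r hb
  have hfS : f ∈ Submodule.span k S := by
    have := pi_mem (FreeMagma.of (Fin.last n)) (by simp [countVar])
    rwa [show evalWord DB.x (FreeMagma.of (Fin.last n)) = DB.x (Fin.last n) from rfl,
      hπy] at this
  -- closure of the span of S under multiplication
  have hclosed : ∀ a : A, ∀ b ∈ Submodule.span k S,
      a * b ∈ Submodule.span k S ∧ b * a ∈ Submodule.span k S := by
    have step1 : ∀ b ∈ S, ∀ a : A,
        a * b ∈ Submodule.span k S ∧ b * a ∈ Submodule.span k S := by
      rintro b ⟨w, hgw, hcw, rfl⟩ a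
      have ha : a ∈ Submodule.span k (Set.range DA.basis) := by
        rw [DA.basis.span_eq]; trivial
      induction ha using Submodule.span_induction with
      | mem c hcmem =>
        obtain ⟨⟨u, hu⟩, rfl⟩ := hcmem
        rw [DA.basis_eq]
        constructor
        · have : evalWord DA.x u * π (evalWord DB.x w) =
              π (evalWord DB.x (FreeMagma.mul (emb u) w)) := by
            rw [evalWord_mul, map_mul, pi_emb]
          rw [this]
          exact pi_mem _ (by rw [countVar_mul, countVar_emb, hcw])
        · have : π (evalWord DB.x w) * evalWord DA.x u =
              π (evalWord DB.x (FreeMagma.mul w (emb u))) := by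
            rw [evalWord_mul, map_mul, pi_emb]
          rw [this]
          exact pi_mem _ (by rw [countVar_mul, countVar_emb, hcw])
      | zero =>
        constructor
        · rw [zero_mul]; exact Submodule.zero_mem _
        · rw [mul_zero]; exact Submodule.zero_mem _
      | add c d _ _ hc hd =>
        constructor
        · rw [add_mul]; exact add_mem hc.1 hd.1
        · rw [mul_add]; exact add_mem hc.2 hd.2
      | smul r c _ hc =>
        constructor
        · rw [smul_mul_assoc]; exact Submodule.smul_mem _ r hc.1
        · rw [mul_smul_comm]; exact Submodule.smul_mem _ r hc.2
    intro a b hb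
    induction hb using Submodule.span_induction with
    | mem b hbmem => exact step1 b hbmem a
    | zero =>
      constructor
      · rw [mul_zero]; exact Submodule.zero_mem _
      · rw [zero_mul]; exact Submodule.zero_mem _
    | add c d _ _ hc hd =>
      constructor
      · rw [mul_add]; exact add_mem hc.1 hd.1
      · rw [add_mul]; exact add_mem hc.2 hd.2
    | smul r c _ hc =>
      constructor
      · rw [mul_smul_comm]; exact Submodule.smul_mem _ r hc.1
      · rw [smul_mul_assoc]; exact Submodule.smul_mem _ r hc.2
  apply le_antisymm
  · -- span S ≤ (f)
    rw [Submodule.span_le]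
    rintro a ⟨w, hgw, hcw, rfl⟩
    simp only [idealGen, SetLike.mem_coe, Submodule.mem_sInf]
    rintro I ⟨hfI, hclos⟩
    clear hgw
    induction w using FreeMagma.rec with
    | of i =>
      by_cases hi : i = Fin.last n
      · subst hi
        rw [show evalWord DB.x (FreeMagma.of (Fin.last n)) = DB.x (Fin.last n) from rfl, hπy]
        exact hfI
      · exfalso; simp [countVar, hi] at hcw
    | mul u v ihu ihv =>
      rw [countVar_mul] at hcw
      rw [evalWord_mul, map_mul]
      rcases (by omega : countVar (Fin.last n) u = 1 ∧ countVar (Fin.last n) v = 0 ∨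
          countVar (Fin.last n) u = 0 ∧ countVar (Fin.last n) v = 1) with ⟨h1, _⟩ | ⟨_, h2⟩
      · exact (hclos (π (evalWord DB.x v)) _ (ihu h1)).2
      · exact (hclos (π (evalWord DB.x u)) _ (ihv h2)).1
  · -- (f) ≤ span S
    exact sInf_le ⟨hfS, hclosed⟩

end Main

/-- Lemma 3.1: let `f ≠ 0` in `A = RS⟨x_1,…,x_n⟩`, let
`B = RS⟨x_1,…,x_n,y⟩` with `y > x_n` (the alphabet is `Fin (n+1)` with `y = Fin.last n`),
let `π : B → A` be the homomorphism with `π(x_i) = x_i`, `π(y) = f`, and let `W_y` be the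
set of good words of `y`-degree `1`. Then the `k`-linear span of `π(W_y)` is the two-sided
ideal `(f)` of `A`. -/
theorem statement9 (k : Type*) [Field k] (n : ℕ) (A B : Type*)
    [NonUnitalNonAssocRing A] [Module k A] [SMulCommClass k A A] [IsScalarTower k A A]
    [NonUnitalNonAssocRing B] [Module k B] [SMulCommClass k B B] [IsScalarTower k B B]
    (DA : FreeRSData k n A) (DB : FreeRSData k (n + 1) B)
    (f : A) (hf : f ≠ 0)
    (π : B →ₙₐ[k] A)
    (hπx : ∀ i : Fin n, π (DB.x i.castSucc) = DA.x i)
    (hπy : π (DB.x (Fin.last n)) = f) :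
    Submodule.span k {a : A | ∃ w : FreeMagma (Fin (n + 1)),
        IsGood w ∧ countVar (Fin.last n) w = 1 ∧ a = π (evalWord DB.x w)} =
      idealGen k f :=
  statement9' k n A B DA DB f hf π hπx hπy

end RS
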